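/- Let ℓ be a label anchored at p and let q = p + (d,0) with d > 0 be a point distinct from p. If q lies on the boundary of the rotated label ℓ(α), then α, taken modulo 2π, belongs to the set ℋ = {2π − arcsin(h_t/d), π + arcsin(h_t/d), arcsin(h_b/d), π − arcsin(h_b/d), 2π − arccos(w_r/d), arccos(w_r/d), π − arccos(w_l/d), π + arccos(w_l/d)}. -/
import Mathlib


open Real Set

/-- Rotation of the plane about the origin by angle `α` (counterclockwise). -/
noncomputable def rot (α : ℝ) (v : ℝ × ℝ) : ℝ × ℝ :=
  (v.1 * Real.cos α - v.2 * Real.sin α, v.1 * Real.sin α + v.2 * Real.cos α)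

/-- The image of a set under rotation by `α` about the point `p`. -/
noncomputable def rotAbout (p : ℝ × ℝ) (α : ℝ) (s : Set (ℝ × ℝ)) : Set (ℝ × ℝ) :=
  (fun x => p + rot α (x - p)) '' s

/-- The closed axis-aligned rectangle containing its anchor point `p`, with distances
`wl, wr, hb, ht` from `p` to the left, right, bottom and top sides. -/
noncomputable def rectLabel (p : ℝ × ℝ) (wl wr hb ht : ℝ) : Set (ℝ × ℝ) :=
  Set.Icc (p.1 - wl, p.2 - hb) (p.1 + wr, p.2 + ht)

/-- Rotation about `p` as a homeomorphism of the plane. -/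
noncomputable def rotHomeo (p : ℝ × ℝ) (α : ℝ) : Homeomorph (ℝ × ℝ) (ℝ × ℝ) where
  toFun x := p + rot α (x - p)
  invFun x := p + rot (-α) (x - p)
  left_inv x := by
    have h := Real.sin_sq_add_cos_sq α
    simp only [rot, Real.cos_neg, Real.sin_neg, Prod.ext_iff, Prod.fst_add, Prod.snd_add,
      Prod.fst_sub, Prod.snd_sub]
    constructor
    · linear_combination (x.1 - p.1) * h
    · linear_combination (x.2 - p.2) * h
  right_inv x := by
    have h := Real.sin_sq_add_cos_sq α
    simp only [rot, Real.cos_neg, Real.sin_neg, Prod.ext_iff, Prod.fst_add, Prod.snd_add,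
      Prod.fst_sub, Prod.snd_sub]
    constructor
    · linear_combination (x.1 - p.1) * h
    · linear_combination (x.2 - p.2) * h
  continuous_toFun := by
    unfold rot; fun_prop
  continuous_invFun := by
    unfold rot; fun_prop

/-- If the point `q = p + (d,0)` lies on the boundary of the rotated label `ℓ(α)`, then
`α` modulo `2π` belongs to the eight-element set `ℋ` of hard conflict events. -/
theorem hard_conflict_event_mem
    (p : ℝ × ℝ) (d : ℝ) (hd : 0 < d)
    (wl wr hb ht : ℝ)
    (hwl : 0 ≤ wl) (hwr : 0 ≤ wr) (hhb : 0 ≤ hb) (hht : 0 ≤ ht)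
    (hw : 0 < wl + wr) (hh : 0 < hb + ht)
    (α : ℝ)
    (hq : p + (d, 0) ∈ frontier (rotAbout p α (rectLabel p wl wr hb ht))) :
    (α : Real.Angle) ∈ (fun x : ℝ => (x : Real.Angle)) ''
      ({2 * π - Real.arcsin (ht / d), π + Real.arcsin (ht / d),
        Real.arcsin (hb / d), π - Real.arcsin (hb / d),
        2 * π - Real.arccos (wr / d), Real.arccos (wr / d),
        π - Real.arccos (wl / d), π + Real.arccos (wl / d)} : Set ℝ) := by
  -- Rewrite the frontier of the image as the image of the frontier.
  have himg : rotAbout p α (rectLabel p wl wr hb ht)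
      = (rotHomeo p α) '' (rectLabel p wl wr hb ht) := rfl
  rw [himg, ← Homeomorph.image_frontier] at hq
  obtain ⟨x, hx, hxq⟩ := hq
  -- Extract the coordinates of `x - p`.
  have hxq' : rot α (x - p) = (d, 0) := by
    have h := hxq
    simp only [rotHomeo, Homeomorph.homeomorph_mk_coe, Equiv.coe_fn_mk] at h
    exact add_left_cancel h
  have h1 : (x.1 - p.1) * Real.cos α - (x.2 - p.2) * Real.sin α = d := by
    have := congrArg Prod.fst hxq'
    simpa [rot] using this
  have h2 : (x.1 - p.1) * Real.sin α + (x.2 - p.2) * Real.cos α = 0 := by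
    have := congrArg Prod.snd hxq'
    simpa [rot] using this
  have hpyth := Real.sin_sq_add_cos_sq α
  have hv1 : x.1 - p.1 = d * Real.cos α := by
    linear_combination Real.cos α * h1 + Real.sin α * h2 - (x.1 - p.1) * hpyth
  have hv2 : x.2 - p.2 = -(d * Real.sin α) := by
    linear_combination (-Real.sin α) * h1 + Real.cos α * h2 - (x.2 - p.2) * hpyth
  -- Describe the frontier of the rectangle.
  rw [rectLabel, isClosed_Icc.frontier_eq, Set.Icc_prod_eq, interior_prod_eq,
    interior_Icc, interior_Icc] at hx
  obtain ⟨hmem, hnot⟩ := hx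
  rw [Set.mem_prod, Set.mem_Icc, Set.mem_Icc] at hmem
  have ha1 : p.1 - wl ≤ x.1 := hmem.1.1
  have ha2 : p.2 - hb ≤ x.2 := hmem.2.1
  have hbb1 : x.1 ≤ p.1 + wr := hmem.1.2
  have hbb2 : x.2 ≤ p.2 + ht := hmem.2.2
  simp only [Set.mem_prod, Set.mem_Ioo, not_and_or, not_and, not_lt] at hnot
  -- One of the four sides is attained.
  have hcase : x.1 = p.1 - wl ∨ x.1 = p.1 + wr ∨ x.2 = p.2 - hb ∨ x.2 = p.2 + ht := by
    rcases hnot with (h | h) | (h | h)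
    · exact Or.inl (le_antisymm h ha1)
    · exact Or.inr (Or.inl (le_antisymm hbb1 h))
    · exact Or.inr (Or.inr (Or.inl (le_antisymm h ha2)))
    · exact Or.inr (Or.inr (Or.inr (le_antisymm hbb2 h)))
  -- Helpers.
  have hsin1 := Real.neg_one_le_sin α
  have hsin2 := Real.sin_le_one α
  have hcos1 := Real.neg_one_le_cos α
  have hcos2 := Real.cos_le_one α
  rcases hcase with hc | hc | hc | hc
  · -- x.1 = p.1 - wl :  cos α = -(wl/d)
    have hdc : d * Real.cos α = -wl := by rw [← hv1, hc]; ring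
    have hcos : Real.cos α = -(wl / d) := by
      field_simp
      linear_combination hdc
    have hub : wl / d ≤ 1 := by
      rw [hcos] at hcos1; linarith
    have hlb : -1 ≤ wl / d := by
      have := div_nonneg hwl hd.le; linarith
    have hcq : Real.cos α = Real.cos (π - Real.arccos (wl / d)) := by
      rw [Real.cos_pi_sub, Real.cos_arccos hlb hub, hcos]
    have hang := Real.Angle.cos_eq_iff_eq_or_eq_neg.mp
      (by rw [Real.Angle.cos_coe, Real.Angle.cos_coe, hcq] :
        Real.Angle.cos (α : Real.Angle) = Real.Angle.cos ((π - Real.arccos (wl / d) : ℝ)))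
    rcases hang with h | h
    · exact ⟨π - Real.arccos (wl / d), by simp, h.symm⟩
    · refine ⟨π + Real.arccos (wl / d), by simp, ?_⟩
      rw [h, ← Real.Angle.coe_neg]
      apply Real.Angle.angle_eq_iff_two_pi_dvd_sub.mpr
      exact ⟨1, by ring⟩
  · -- x.1 = p.1 + wr :  cos α = wr/d
    have hdc : d * Real.cos α = wr := by rw [← hv1, hc]; ring
    have hcos : Real.cos α = wr / d := by
      field_simp
      linear_combination hdc
    have hub : wr / d ≤ 1 := by rw [← hcos]; exact hcos2
    have hlb : -1 ≤ wr / d := by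
      have := div_nonneg hwr hd.le; linarith
    have hcq : Real.cos α = Real.cos (Real.arccos (wr / d)) := by
      rw [Real.cos_arccos hlb hub, hcos]
    have hang := Real.Angle.cos_eq_iff_eq_or_eq_neg.mp
      (by rw [Real.Angle.cos_coe, Real.Angle.cos_coe, hcq] :
        Real.Angle.cos (α : Real.Angle) = Real.Angle.cos ((Real.arccos (wr / d) : ℝ)))
    rcases hang with h | h
    · exact ⟨Real.arccos (wr / d), by simp, h.symm⟩
    · refine ⟨2 * π - Real.arccos (wr / d), by simp, ?_⟩
      rw [h, ← Real.Angle.coe_neg]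
      apply Real.Angle.angle_eq_iff_two_pi_dvd_sub.mpr
      exact ⟨1, by ring⟩
  · -- x.2 = p.2 - hb :  sin α = hb/d
    have hds : d * Real.sin α = hb := by
      have : -(d * Real.sin α) = -hb := by rw [← hv2, hc]; ring
      linarith
    have hsin : Real.sin α = hb / d := by
      field_simp
      linear_combination hds
    have hub : hb / d ≤ 1 := by rw [← hsin]; exact hsin2
    have hlb : -1 ≤ hb / d := by
      have := div_nonneg hhb hd.le; linarith
    have hsq : Real.sin α = Real.sin (Real.arcsin (hb / d)) := by
      rw [Real.sin_arcsin hlb hub, hsin]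
    have hang := Real.Angle.sin_eq_iff_eq_or_add_eq_pi.mp
      (by rw [Real.Angle.sin_coe, Real.Angle.sin_coe, hsq] :
        Real.Angle.sin (α : Real.Angle) = Real.Angle.sin ((Real.arcsin (hb / d) : ℝ)))
    rcases hang with h | h
    · exact ⟨Real.arcsin (hb / d), by simp, h.symm⟩
    · refine ⟨π - Real.arcsin (hb / d), by simp, ?_⟩
      show (((π - Real.arcsin (hb / d)) : ℝ) : Real.Angle) = (α : Real.Angle)
      rw [Real.Angle.coe_sub, sub_eq_iff_eq_add]
      exact h.symm
  · -- x.2 = p.2 + ht :  sin α = -(ht/d)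
    have hds : d * Real.sin α = -ht := by
      have : -(d * Real.sin α) = ht := by rw [← hv2, hc]; ring
      linarith
    have hsin : Real.sin α = -(ht / d) := by
      field_simp
      linear_combination hds
    have hub : ht / d ≤ 1 := by
      rw [hsin] at hsin1; linarith
    have hlb : -1 ≤ ht / d := by
      have := div_nonneg hht hd.le; linarith
    have hsq : Real.sin α = Real.sin (-Real.arcsin (ht / d)) := by
      rw [Real.sin_neg, Real.sin_arcsin hlb hub, hsin]
    have hang := Real.Angle.sin_eq_iff_eq_or_add_eq_pi.mp
      (by rw [Real.Angle.sin_coe, Real.Angle.sin_coe, hsq] :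
        Real.Angle.sin (α : Real.Angle) = Real.Angle.sin ((-Real.arcsin (ht / d) : ℝ)))
    rcases hang with h | h
    · refine ⟨2 * π - Real.arcsin (ht / d), by simp, ?_⟩
      rw [h]
      apply Real.Angle.angle_eq_iff_two_pi_dvd_sub.mpr
      exact ⟨1, by ring⟩
    · refine ⟨π + Real.arcsin (ht / d), by simp, ?_⟩
      have h' : (α : Real.Angle) = ((π : ℝ) : Real.Angle) - ((-Real.arcsin (ht / d) : ℝ) : Real.Angle) := by
        rw [eq_sub_iff_add_eq, h]
      rw [h', ← Real.Angle.coe_sub]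
      norm_num
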